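/- Let $d, d' \ge 1$, let $a(n) = \sum_{i=1}^d A_i \alpha_i^n$ and $b(n) = \sum_{j=1}^{d'} B_j \beta_j^n$ for complex numbers $A_i, \alpha_i, B_j, \beta_j$, and let $C(n) = \sum_{k=0}^{n} \binom{n}{k} a(k) b(n-k)$. Then the ordinary generating function of $C$ is rational with denominator of degree at most $d\,d'$: there exist polynomials $p, q \in \mathbb{C}[x]$ with $q(0) = 1$, $\deg q \le d\,d'$, and $\deg p \le d\,d' - 1$, such that the formal power series identity $q(x) \cdot \sum_{n=0}^{\infty} C(n) x^n = p(x)$ holds in $\mathbb{C}[[x]]$. -/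

import Mathlib

open Finset PowerSeries

lemma geom_aux (z : ℂ) :
    ((1 - Polynomial.C z * Polynomial.X : Polynomial ℂ) : PowerSeries ℂ) *
      PowerSeries.mk (fun n => z ^ n) = 1 := by
  push_cast
  ext n
  rw [sub_mul, one_mul, map_sub]
  cases n with
  | zero => simp
  | succ m =>
    rw [mul_comm (PowerSeries.C z) PowerSeries.X, mul_assoc]
    simp [PowerSeries.coeff_succ_X_mul, PowerSeries.coeff_C_mul, pow_succ, mul_comm]

/-- The ordinary generating function of the binomial convolution of two Binet-type
sequences is rational, with denominator degree at most `d * d'` and numerator degree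
at most `d * d' - 1`. -/
theorem binomial_convolution_ogf_rational
    (d d' : ℕ) (hd : 1 ≤ d) (hd' : 1 ≤ d')
    (A α : ℕ → ℂ) (B β : ℕ → ℂ)
    (a b C : ℕ → ℂ)
    (ha : ∀ n : ℕ, a n = ∑ i ∈ Finset.Icc 1 d, A i * α i ^ n)
    (hb : ∀ n : ℕ, b n = ∑ j ∈ Finset.Icc 1 d', B j * β j ^ n)
    (hC : ∀ n : ℕ, C n = ∑ k ∈ Finset.range (n + 1), (n.choose k : ℂ) * a k * b (n - k)) :
    ∃ p q : Polynomial ℂ, q.coeff 0 = 1 ∧ q.natDegree ≤ d * d' ∧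
      p.natDegree ≤ d * d' - 1 ∧
      (q : PowerSeries ℂ) * PowerSeries.mk C = (p : PowerSeries ℂ) := by
  classical
  set S : Finset (ℕ × ℕ) := (Finset.Icc 1 d) ×ˢ (Finset.Icc 1 d') with hS
  set γ : ℕ × ℕ → ℂ := fun s => α s.1 + β s.2 with hγ
  set c : ℕ × ℕ → ℂ := fun s => A s.1 * B s.2 with hc
  have hcard : S.card = d * d' := by
    simp [hS, Nat.card_Icc]
  -- closed form for C
  have key : ∀ n, C n = ∑ s ∈ S, c s * γ s ^ n := by
    intro n
    have h1 : C n = ∑ k ∈ Finset.range (n+1), ∑ i ∈ Finset.Icc 1 d, ∑ j ∈ Finset.Icc 1 d',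
        (n.choose k : ℂ) * (A i * α i ^ k) * (B j * β j ^ (n-k)) := by
      rw [hC]
      refine Finset.sum_congr rfl fun k _ => ?_
      rw [ha, hb, mul_assoc, Finset.sum_mul_sum, Finset.mul_sum]
      refine Finset.sum_congr rfl fun i _ => ?_
      rw [Finset.mul_sum]
      refine Finset.sum_congr rfl fun j _ => ?_
      ring
    rw [h1, Finset.sum_comm, hS, Finset.sum_product]
    refine Finset.sum_congr rfl fun i _ => ?_
    rw [Finset.sum_comm]
    refine Finset.sum_congr rfl fun j _ => ?_
    have hadd : (α i + β j) ^ n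
        = ∑ k ∈ Finset.range (n+1), α i ^ k * β j ^ (n-k) * (n.choose k : ℂ) :=
      add_pow (α i) (β j) n
    show _ = A i * B j * (α i + β j) ^ n
    rw [hadd, Finset.mul_sum]
    refine Finset.sum_congr rfl fun k _ => ?_
    ring
  have hmk : PowerSeries.mk C
      = ∑ s ∈ S, PowerSeries.C (c s) * PowerSeries.mk (fun n => γ s ^ n) := by
    ext n
    rw [PowerSeries.coeff_mk, key, map_sum]
    refine Finset.sum_congr rfl fun s _ => ?_
    rw [PowerSeries.coeff_C_mul, PowerSeries.coeff_mk]
  set f : ℕ × ℕ → Polynomial ℂ := fun s => 1 - Polynomial.C (γ s) * Polynomial.X with hf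
  have hfdeg : ∀ s, (f s).natDegree ≤ 1 := by
    intro s
    refine (Polynomial.natDegree_sub_le _ _).trans ?_
    refine max_le (by simp) ?_
    exact (Polynomial.natDegree_C_mul_le _ _).trans (by simp)
  refine ⟨∑ s ∈ S, Polynomial.C (c s) * ∏ t ∈ S.erase s, f t, ∏ s ∈ S, f s, ?_, ?_, ?_, ?_⟩
  · rw [Polynomial.coeff_zero_eq_eval_zero, Polynomial.eval_prod]
    simp [hf]
  · refine (Polynomial.natDegree_prod_le _ _).trans ?_
    calc ∑ s ∈ S, (f s).natDegree ≤ ∑ s ∈ S, 1 := Finset.sum_le_sum fun s _ => hfdeg s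
    _ = d * d' := by rw [Finset.sum_const, smul_eq_mul, mul_one, hcard]
  · refine Polynomial.natDegree_sum_le_of_forall_le _ _ fun s hs => ?_
    refine (Polynomial.natDegree_mul_le).trans ?_
    rw [Polynomial.natDegree_C, zero_add]
    refine (Polynomial.natDegree_prod_le _ _).trans ?_
    calc ∑ t ∈ S.erase s, (f t).natDegree ≤ ∑ t ∈ S.erase s, 1 :=
        Finset.sum_le_sum fun t _ => hfdeg t
    _ = S.card - 1 := by rw [Finset.sum_const, smul_eq_mul, mul_one, Finset.card_erase_of_mem hs]
    _ = d * d' - 1 := by rw [hcard]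
  · rw [hmk, Finset.mul_sum]
    have hsum : ((∑ s ∈ S, Polynomial.C (c s) * ∏ t ∈ S.erase s, f t : Polynomial ℂ)
          : PowerSeries ℂ)
        = ∑ s ∈ S, PowerSeries.C (c s)
            * ((∏ t ∈ S.erase s, f t : Polynomial ℂ) : PowerSeries ℂ) := by
      rw [← Polynomial.coeToPowerSeries.ringHom_apply, map_sum]
      refine Finset.sum_congr rfl fun s _ => ?_
      rw [map_mul, Polynomial.coeToPowerSeries.ringHom_apply,
        Polynomial.coeToPowerSeries.ringHom_apply, Polynomial.coe_C]
    rw [hsum]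
    refine Finset.sum_congr rfl fun s hs => ?_
    have hsplit : (∏ t ∈ S, f t) = f s * ∏ t ∈ S.erase s, f t :=
      (Finset.mul_prod_erase S f hs).symm
    rw [hsplit, ← Polynomial.coeToPowerSeries.ringHom_apply, map_mul,
      Polynomial.coeToPowerSeries.ringHom_apply, Polynomial.coeToPowerSeries.ringHom_apply]
    have hg := geom_aux (γ s)
    calc ((f s : Polynomial ℂ) : PowerSeries ℂ)
          * ((∏ t ∈ S.erase s, f t : Polynomial ℂ) : PowerSeries ℂ)
          * (PowerSeries.C (c s) * PowerSeries.mk (fun n => γ s ^ n))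
        = PowerSeries.C (c s) * (((∏ t ∈ S.erase s, f t : Polynomial ℂ) : PowerSeries ℂ)
            * (((f s : Polynomial ℂ) : PowerSeries ℂ) * PowerSeries.mk (fun n => γ s ^ n))) := by
          ring
    _ = PowerSeries.C (c s) * ((∏ t ∈ S.erase s, f t : Polynomial ℂ) : PowerSeries ℂ) := by
          rw [hf]
          simp only
          rw [hg, mul_one]
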